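/- The complex Waring rank of the cubic form x₀(x₁² + x₂² + … + xₙ²) ∈ ℂ[x₀,…,xₙ] is exactly 2n. -/

import Mathlib

open MvPolynomial

/-- `L` is a linear form (a `ℂ`-linear combination of the variables). -/
def IsLinearForm {n : ℕ} (L : MvPolynomial (Fin (n + 1)) ℂ) : Prop :=
  ∃ a : Fin (n + 1) → ℂ, L = ∑ i, C (a i) * X i


lemma waring_lower (n s : ℕ) (a : Fin s → Fin (n+1) → ℂ)
    (hid : ∀ x : Fin (n+1) → ℂ,
      (x 0) * ∑ i : Fin (n+1), (if i = 0 then (0:ℂ) else (x i)^2)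
        = ∑ k, (∑ i, a k i * x i)^3) :
    2 * n ≤ s := by
  classical
  set g : Fin s → (Fin (n+1) → ℂ) → ℂ := fun k x => ∑ i, a k i * x i with hg
  have gadd : ∀ k x y, g k (x + y) = g k x + g k y := by
    intro k x y
    simp [hg, mul_add, Finset.sum_add_distrib]
  set B : (Fin (n+1) → ℂ) → (Fin (n+1) → ℂ) → ℂ :=
    fun x y => ∑ i, if i = 0 then (0:ℂ) else x i * y i with hB
  set f : (Fin (n+1) → ℂ) → ℂ :=
    fun x => (x 0) * ∑ i : Fin (n+1), (if i = 0 then (0:ℂ) else (x i)^2) with hf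
  have key : ∀ x y z : Fin (n+1) → ℂ,
      3 * ∑ k, g k x * g k y * g k z
        = x 0 * B y z + y 0 * B x z + z 0 * B x y := by
    intro x y z
    have h1 : ∑ k, ((g k (x+y+z))^3 - (g k (x+y))^3 - (g k (x+z))^3 - (g k (y+z))^3
        + (g k x)^3 + (g k y)^3 + (g k z)^3) = 6 * ∑ k, g k x * g k y * g k z := by
      rw [Finset.mul_sum]
      apply Finset.sum_congr rfl
      intro k _
      rw [show x + y + z = (x + y) + z from rfl, gadd, gadd, gadd, gadd]
      ring
    have h2 : ∑ k, ((g k (x+y+z))^3 - (g k (x+y))^3 - (g k (x+z))^3 - (g k (y+z))^3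
        + (g k x)^3 + (g k y)^3 + (g k z)^3)
        = f (x+y+z) - f (x+y) - f (x+z) - f (y+z) + f x + f y + f z := by
      simp only [Finset.sum_add_distrib, Finset.sum_sub_distrib]
      simp only [hf]
      rw [← hid, ← hid, ← hid, ← hid, ← hid, ← hid, ← hid]
    have h3 : f (x+y+z) - f (x+y) - f (x+z) - f (y+z) + f x + f y + f z
        = 2 * (x 0 * B y z + y 0 * B x z + z 0 * B x y) := by
      simp only [hf, hB, Finset.mul_sum, mul_ite, mul_zero, Pi.add_apply]
      rw [← Finset.sum_sub_distrib, ← Finset.sum_sub_distrib, ← Finset.sum_sub_distrib,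
        ← Finset.sum_add_distrib, ← Finset.sum_add_distrib, ← Finset.sum_add_distrib,
        ← Finset.sum_add_distrib, ← Finset.sum_add_distrib, Finset.mul_sum]
      apply Finset.sum_congr rfl
      intro i _
      by_cases hi : i = 0 <;> simp [hi] <;> ring
    have h6 : 6 * ∑ k, g k x * g k y * g k z
        = 2 * (x 0 * B y z + y 0 * B x z + z 0 * B x y) := by
      rw [← h1, h2, h3]
    have : (2:ℂ) * (3 * ∑ k, g k x * g k y * g k z)
        = 2 * (x 0 * B y z + y 0 * B x z + z 0 * B x y) := by
      rw [← h6]; ring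
    exact mul_left_cancel₀ two_ne_zero this
  -- now specialize
  set w : Fin s → (Fin n → ℂ) := fun k i => a k (i.succ) with hw
  set α : Fin s → ℂ := fun k => a k 0 with hα
  set ip : (Fin n → ℂ) → (Fin n → ℂ) → ℂ := fun u v => ∑ i, u i * v i with hip
  set ext : (Fin n → ℂ) → (Fin (n+1) → ℂ) := fun u => Fin.cons 0 u with hext
  have gext : ∀ k u, g k (ext u) = ip (w k) u := by
    intro k u
    simp [hg, hext, hip, hw, Fin.sum_univ_succ]
  have extadd : ∀ u v : Fin n → ℂ, ext u + ext v = ext (u + v) := by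
    intro u v; funext i
    refine Fin.cases ?_ ?_ i <;> simp [hext] <;> exact fun _ => rfl
  have Bext : ∀ u v : Fin n → ℂ, B (ext u) (ext v) = ip u v := by
    intro u v
    simp [hB, hext, hip, Fin.sum_univ_succ, Fin.succ_ne_zero]
  have e0 : (Fin (n+1) → ℂ) := Pi.single 0 1
  have hC : ∀ u v : Fin n → ℂ, 3 * ∑ k, α k * (ip (w k) u * ip (w k) v) = ip u v := by
    intro u v
    have := key (ext u) (ext v) (Pi.single 0 1)
    simp only [gext, hext, Fin.cons_zero, Pi.single_eq_same, zero_mul, one_mul,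
      zero_add, add_zero] at this
    simp only [show ∀ u : Fin n → ℂ, (Fin.cons 0 u : Fin (n+1) → ℂ) = ext u from fun _ => rfl,
      gext] at this
    rw [Bext] at this
    have hgz : ∀ k, g k (Pi.single 0 1) = α k := by
      intro k
      simp [hg, hα, Pi.single_apply]
    simp only [hgz] at this
    rw [← this]
    congr 1
    apply Finset.sum_congr rfl
    intro k _
    ring
  have hD : ∀ u v r : Fin n → ℂ, ∑ k, ip (w k) u * ip (w k) v * ip (w k) r = 0 := by
    intro u v r
    have := key (ext u) (ext v) (ext r)
    simp only [gext, hext, Fin.cons_zero, zero_mul, add_zero] at this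
    simp only [show ∀ u : Fin n → ℂ, (Fin.cons 0 u : Fin (n+1) → ℂ) = ext u from fun _ => rfl,
      gext] at this
    linear_combination this / 3
  clear key gadd hid hext extadd gext Bext hα hg hB hf e0
  -- the linear map M
  let M : (Fin s → ℂ) →ₗ[ℂ] (Fin n → ℂ) :=
    { toFun := fun c => ∑ k, c k • w k
      map_add' := by intro c d; simp [add_smul, Finset.sum_add_distrib]
      map_smul' := by intro t c; simp [smul_smul, Finset.smul_sum] }
  have ipwsingle : ∀ (k : Fin s) (i : Fin n), ip (w k) (Pi.single i 1) = w k i := by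
    intro k i
    simp only [hip, Pi.single_apply, mul_ite, mul_one, mul_zero]
    simp
  have ipsinglel : ∀ (v : Fin n → ℂ) (i : Fin n), ip (Pi.single i 1) v = v i := by
    intro v i
    simp only [hip, Pi.single_apply, ite_mul, one_mul, zero_mul]
    simp
  have hMsurj : Function.Surjective M := by
    intro v
    refine ⟨fun k => 3 * α k * ip (w k) v, ?_⟩
    have : M (fun k => 3 * α k * ip (w k) v) = ∑ k, (3 * α k * ip (w k) v) • w k := rfl
    rw [this]
    funext i
    have h1 := hC (Pi.single i 1) v
    rw [ipsinglel] at h1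
    rw [← h1, Finset.mul_sum, Finset.sum_apply]
    apply Finset.sum_congr rfl
    intro k _
    rw [Pi.smul_apply, smul_eq_mul, ipwsingle]
    ring
  have hker : ∀ v : Fin n → ℂ, (fun k => ip (w k) v ^ 2) ∈ LinearMap.ker M := by
    intro v
    rw [LinearMap.mem_ker]
    have : M (fun k => ip (w k) v ^ 2) = ∑ k, (ip (w k) v ^ 2) • w k := rfl
    rw [this]
    funext i
    rw [Finset.sum_apply]
    simp only [Pi.zero_apply]
    have h1 := hD v v (Pi.single i 1)
    rw [← h1]
    apply Finset.sum_congr rfl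
    intro k _
    rw [Pi.smul_apply, smul_eq_mul, ipwsingle]
    ring
  -- rank-nullity
  have hfr : Module.finrank ℂ (Fin n → ℂ) = n := by simp
  have hrn : n + Module.finrank ℂ ↥(LinearMap.ker M) = s := by
    have := LinearMap.finrank_range_add_finrank_ker M
    rw [LinearMap.range_eq_top.mpr hMsurj] at this
    simpa [hfr] using this
  -- span of the w's
  have hspan : Submodule.span ℂ (Set.range w) = ⊤ := by
    rw [eq_top_iff]
    intro v _
    obtain ⟨c, rfl⟩ := hMsurj v
    have : M c = ∑ k, c k • w k := rfl
    rw [this]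
    exact Submodule.sum_mem _ fun k _ =>
      Submodule.smul_mem _ _ (Submodule.subset_span ⟨k, rfl⟩)
  obtain ⟨b, hbsub, hbspan, hbli⟩ := exists_linearIndependent ℂ (Set.range w)
  rw [hspan] at hbspan
  have hbfin : b.Finite := Set.Finite.subset (Set.finite_range w) hbsub
  haveI := hbfin.fintype
  let 𝔅 : Module.Basis b ℂ (Fin n → ℂ) := Module.Basis.mk hbli (by rw [Subtype.range_coe, hbspan])
  have h𝔅 : ∀ j : b, 𝔅 j = j.1 := fun j => Module.Basis.mk_apply _ _ j
  have hcard : Fintype.card b = n := by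
    have := Module.finrank_eq_card_basis 𝔅
    rw [hfr] at this
    omega
  have hkk : ∀ j : b, ∃ k : Fin s, w k = j.1 := fun j => hbsub j.2
  choose kk hkk using hkk
  -- dual vectors
  set vj : b → (Fin n → ℂ) := fun j i => 𝔅.coord j (Pi.single i 1) with hvj
  have hdual : ∀ (j j' : b), ip (j'.1) (vj j) = if j' = j then 1 else 0 := by
    intro j j'
    have h1 : ip (j'.1) (vj j) = 𝔅.coord j (∑ i, (j'.1 i) • (Pi.single i 1 : Fin n → ℂ)) := by
      rw [map_sum, hip]
      simp only
      apply Finset.sum_congr rfl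
      intro i _
      rw [map_smul, smul_eq_mul, hvj]
    have h2 : ∑ i, (j'.1 i) • (Pi.single i 1 : Fin n → ℂ) = j'.1 := by
      have h3 : ∀ i : Fin n, (j'.1 i) • (Pi.single i 1 : Fin n → ℂ) = Pi.single i (j'.1 i) := by
        intro i
        funext m
        simp only [Pi.smul_apply, Pi.single_apply, smul_eq_mul]
        split <;> simp
      rw [Finset.sum_congr rfl fun i _ => h3 i, Finset.univ_sum_single]
    rw [h1, h2, ← h𝔅 j', Module.Basis.coord_apply, Module.Basis.repr_self, Finsupp.single_apply]
  -- the independent family in the kernel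
  set U : b → (Fin s → ℂ) := fun j k => ip (w k) (vj j) ^ 2 with hU
  have hUker : ∀ j, U j ∈ LinearMap.ker M := fun j => hker (vj j)
  have hULI : LinearIndependent ℂ U := by
    rw [Fintype.linearIndependent_iff]
    intro t ht j'
    have h0 := congrFun ht (kk j')
    rw [Finset.sum_apply] at h0
    simp only [Pi.zero_apply] at h0
    have heval : ∀ j : b, (t j • U j) (kk j') = if j' = j then t j else 0 := by
      intro j
      rw [Pi.smul_apply, smul_eq_mul, hU]
      simp only
      have h4 : ip (w (kk j')) (vj j) = if j' = j then 1 else 0 := by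
        rw [hkk j']; exact hdual j j'
      rw [h4]
      split <;> simp
    rw [Finset.sum_congr rfl fun j _ => heval j] at h0
    simpa using h0
  have hULI' : LinearIndependent ℂ (fun j => (⟨U j, hUker j⟩ : ↥(LinearMap.ker M))) := by
    apply LinearIndependent.of_comp (LinearMap.ker M).subtype
    exact hULI
  have hle : Fintype.card b ≤ Module.finrank ℂ ↥(LinearMap.ker M) :=
    hULI'.fintype_card_le_finrank
  omega


-- collapsing  a two-entry coefficient vector
lemma two_term_linear {n : ℕ} (u v : ℂ) (m : Fin (n+1)) (hm : m ≠ 0) :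
    (∑ i, C (if i = 0 then u else if i = m then v else 0) * X i
      : MvPolynomial (Fin (n+1)) ℂ) = C u * X 0 + C v * X m := by
  classical
  have h : ∀ i : Fin (n+1), C (if i = 0 then u else if i = m then v else 0) * X i
      = ((if i = 0 then C u * X i else 0) + (if i = m then C v * X i else 0)
        : MvPolynomial (Fin (n+1)) ℂ) := by
    intro i
    by_cases h0 : i = 0
    · subst h0
      simp [Ne.symm hm]
    · by_cases h1 : i = m <;> simp [h0, h1, hm]
  rw [Finset.sum_congr rfl fun i _ => h i, Finset.sum_add_distrib,
    Finset.sum_ite_eq' Finset.univ (0 : Fin (n+1)) (fun i => C u * X i),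
    Finset.sum_ite_eq' Finset.univ m (fun i => C v * X i)]
  simp

lemma waring_upper (n : ℕ) (hn : 2 ≤ n) :
    ∃ L : Fin (2 * n) → MvPolynomial (Fin (n + 1)) ℂ,
      (∀ k, IsLinearForm (L k)) ∧
      (X 0 * ∑ i : Fin (n + 1), if i = 0 then 0 else X i ^ 2) = ∑ k, L k ^ 3 := by
  classical
  obtain ⟨m, rfl⟩ : ∃ m, n = m + 2 := ⟨n - 2, by omega⟩
  set n' := m + 2 with hn'
  -- weights
  set t : Fin n' → ℂ := fun j => if j = 0 then (1 - (n' : ℂ)) else 1 with ht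
  have htsum : ∑ j, t j = 0 := by
    rw [ht]
    simp [Fin.sum_univ_succ, Fin.succ_ne_zero, hn']
    rw [Fin.sum_univ_succ]
    simp only [Fin.succ_ne_zero, eq_self_iff_true, if_true, if_false, Finset.sum_const,
      Finset.card_univ, Fintype.card_fin, nsmul_eq_mul, mul_one]
    push_cast
    ring
  have htne : ∀ j, t j ≠ 0 := by
    intro j
    show (if j = 0 then (1 - (n' : ℂ)) else 1) ≠ 0
    split
    · intro h
      have h1 : ((n' : ℂ)) = 1 := by linear_combination -h
      norm_cast at h1
      omega
    · exact one_ne_zero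
  have hc0 : ∀ j, ∃ z : ℂ, z ^ 3 = t j := fun j =>
    IsAlgClosed.exists_pow_nat_eq (t j) (by norm_num)
  choose c hc using hc0
  have hcne : ∀ j, c j ≠ 0 := by
    intro j hz
    exact htne j (by rw [← hc j, hz]; ring)
  have he0 : ∀ j, ∃ z : ℂ, z ^ 2 = (6 * c j)⁻¹ := fun j =>
    IsAlgClosed.exists_pow_nat_eq _ (by norm_num)
  choose e he using he0
  have he' : ∀ j, 6 * c j * e j ^ 2 = 1 := by
    intro j
    rw [he j]
    exact mul_inv_cancel₀ (mul_ne_zero (by norm_num) (hcne j))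
  -- the linear forms
  set sgn : Fin 2 → ℂ := fun r => if r = 0 then 1 else -1 with hsgn
  set M : Fin 2 × Fin n' → MvPolynomial (Fin (n' + 1)) ℂ :=
    fun p => C (c p.2) * X 0 + C (sgn p.1 * e p.2) * X p.2.succ with hM
  refine ⟨fun k => M (finProdFinEquiv.symm k), ?_, ?_⟩
  · intro k
    refine ⟨fun i => if i = 0 then c (finProdFinEquiv.symm k).2
      else if i = (finProdFinEquiv.symm k).2.succ
        then sgn (finProdFinEquiv.symm k).1 * e (finProdFinEquiv.symm k).2 else 0, ?_⟩
    rw [two_term_linear _ _ _ (Fin.succ_ne_zero _)]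
  · rw [Equiv.sum_comp finProdFinEquiv.symm (fun p => M p ^ 3), Fintype.sum_prod_type,
      Fin.sum_univ_two]
    rw [← Finset.sum_add_distrib]
    have hj : ∀ j : Fin n', M (0, j) ^ 3 + M (1, j) ^ 3
        = C (2 * c j ^ 3) * X 0 ^ 3
          + C (6 * c j * e j ^ 2) * (X 0 * X j.succ ^ 2) := by
      intro j
      rw [hM]
      simp only [hsgn]
      norm_num
      simp only [C_mul, C_pow, map_ofNat, map_neg, map_one]
      ring
    have h4 : ∑ j : Fin n', (M (0,j) ^ 3 + M (1,j) ^ 3)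
        = (∑ j : Fin n', C (2 * c j ^ 3)) * X 0 ^ 3
          + ∑ j : Fin n', C (6 * c j * e j ^ 2) * (X 0 * X j.succ ^ 2) := by
      rw [Finset.sum_congr rfl fun j _ => hj j, Finset.sum_add_distrib, Finset.sum_mul]
    have h1 : (∑ j : Fin n', C (2 * c j ^ 3) : MvPolynomial (Fin (n'+1)) ℂ) = 0 := by
      rw [← map_sum]
      have : ∑ j : Fin n', (2 * c j ^ 3) = 0 := by
        calc ∑ j : Fin n', (2 * c j ^ 3) = 2 * ∑ j, t j := by
              rw [Finset.mul_sum]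
              exact Finset.sum_congr rfl fun j _ => by rw [hc j]
          _ = 0 := by rw [htsum]; ring
      rw [this, map_zero]
    have h2 : ∀ j : Fin n', (C (6 * c j * e j ^ 2) : MvPolynomial (Fin (n'+1)) ℂ) = 1 := by
      intro j; rw [he' j, C_1]
    rw [h4, h1, zero_mul, zero_add]
    have h5 : ∑ j : Fin n', C (6 * c j * e j ^ 2) * (X 0 * X j.succ ^ 2)
        = ∑ j : Fin n', X 0 * X j.succ ^ 2 :=
      Finset.sum_congr rfl fun j _ => by rw [h2 j, one_mul]
    rw [h5, Finset.mul_sum, Fin.sum_univ_succ]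
    simp [Fin.succ_ne_zero]


theorem stmt_12 (n : ℕ) (hn : 2 ≤ n)
    (F : MvPolynomial (Fin (n + 1)) ℂ)
    (hF : F = X 0 * ∑ i : Fin (n + 1), if i = 0 then 0 else X i ^ 2) :
    (∃ L : Fin (2 * n) → MvPolynomial (Fin (n + 1)) ℂ,
      (∀ k, IsLinearForm (L k)) ∧ F = ∑ k, L k ^ 3) ∧
    (∀ (s : ℕ) (L : Fin s → MvPolynomial (Fin (n + 1)) ℂ),
      (∀ k, IsLinearForm (L k)) → F = ∑ k, L k ^ 3 → 2 * n ≤ s) := by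
  constructor
  · obtain ⟨L, h1, h2⟩ := waring_upper n hn
    exact ⟨L, h1, by rw [hF, h2]⟩
  · intro s L hL hsum
    choose a ha using hL
    apply waring_lower n s a
    intro x
    have h1 : eval x F = x 0 * ∑ i : Fin (n+1), (if i = 0 then (0:ℂ) else (x i)^2) := by
      rw [hF]
      simp [apply_ite (eval x)]
    have h2 : eval x F = ∑ k, (∑ i, a k i * x i) ^ 3 := by
      rw [hsum]
      simp [ha]
    rw [← h1, h2]
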